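/- In a Euclidean Hurwitz algebra, if x and y are orthonormal vectors each orthogonal to the unit element 1, then x · (x · y) = -y. -/

import Mathlib

theorem stmt_7 {A : Type*} [NormedAddCommGroup A] [InnerProductSpace ℝ A]
    (mul : A →ₗ[ℝ] A →ₗ[ℝ] A) (e : A) (he : ‖e‖ = 1)
    (hul : ∀ x, mul e x = x) (hur : ∀ x, mul x e = x)
    (hmon : ∀ x y, ‖mul x y‖ = ‖x‖ * ‖y‖)
    (x y : A) (hx : ‖x‖ = 1) (hy : ‖y‖ = 1)
    (hxe : (inner ℝ x e : ℝ) = 0) (hye : (inner ℝ y e : ℝ) = 0)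
    (hxy : (inner ℝ x y : ℝ) = 0) :
    mul x (mul x y) = -y := by
  have key : ∀ a v : A, (inner ℝ (mul a v) (mul a v) : ℝ) = ‖a‖ ^ 2 * inner ℝ v v := by
    intro a v
    rw [real_inner_self_eq_norm_sq, real_inner_self_eq_norm_sq, hmon, mul_pow]
  have P1 : ∀ a b c : A, (inner ℝ (mul a b) (mul a c) : ℝ) = ‖a‖ ^ 2 * inner ℝ b c := by
    intro a b c
    have hbc := key a (b + c)
    simp only [map_add, real_inner_add_add_self] at hbc
    rw [key a b, key a c] at hbc
    have hcomm : (inner ℝ c b : ℝ) = inner ℝ b c := real_inner_comm b c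
    linarith
  have P2 : ∀ a b c d : A, (inner ℝ (mul a b) (mul c d) : ℝ) + inner ℝ (mul c b) (mul a d)
      = 2 * inner ℝ a c * inner ℝ b d := by
    intro a b c d
    have h := P1 (a + c) b d
    simp only [map_add, LinearMap.add_apply, inner_add_left, inner_add_right,
      norm_add_sq_real] at h
    rw [P1 a b d, P1 c b d] at h
    nlinarith [h]
  have adj : ∀ b c : A, (inner ℝ (mul x b) c : ℝ) = -inner ℝ b (mul x c) := by
    intro b c
    have h := P2 x b e c
    rw [hul, hul, hxe] at h
    linarith
  apply ext_inner_right ℝ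
  intro c
  rw [adj (mul x y) c, P1 x y c, hx, inner_neg_left]
  ring
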